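/- Let A be a free abelian group of finite rank with involution t, fixed subgroup A^+, negated subgroup A^-. Let B be the subgroup with 2A ≤ B ≤ A such that B/2A is the fixed-point subspace of the induced action of t on A/2A. Then B = A^+ + A^-. -/

import Mathlib

open Pointwise

/-- Let `B = {a ∈ A : t(a) - a ∈ 2A}` (so `B/2A` is the fixed-point subspace of `t` on `A/2A`).
Then `B = A⁺ + A⁻`. -/
theorem stmt_2 (A : Type*) [AddCommGroup A]
    [Module.Free ℤ A] [Module.Finite ℤ A]
    (t : A →ₗ[ℤ] A) (ht : t ∘ₗ t = LinearMap.id)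
    (B : Submodule ℤ A)
    (hB : ∀ a : A, a ∈ B ↔ t a - a ∈ (2 : ℤ) • (⊤ : Submodule ℤ A)) :
    B = LinearMap.ker (t - LinearMap.id) ⊔ LinearMap.ker (t + LinearMap.id) := by
  have htt : ∀ a : A, t (t a) = a := fun a => congrArg (· a) ht
  apply le_antisymm
  · intro a ha
    rw [hB] at ha
    obtain ⟨x, -, hx⟩ := ha
    simp only [DistribSMul.toLinearMap_apply] at hx
    -- hx : (2:ℤ) • x = t a - a
    have htx : t x = -x := by
      have h2 : (2 : ℤ) • t x = (2 : ℤ) • (-x) := by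
        have h := congrArg t hx
        rw [map_smul, map_sub, htt] at h
        rw [h, smul_neg, hx]
        abel
      exact smul_right_injective A two_ne_zero h2
    refine Submodule.mem_sup.mpr ⟨a + x, ?_, -x, ?_, by abel⟩
    · simp only [LinearMap.mem_ker, LinearMap.sub_apply, LinearMap.id_apply, map_add, htx]
      have : t a = a + (2 : ℤ) • x := by rw [hx]; abel
      rw [this]; abel
    · simp [LinearMap.mem_ker, htx]
  · rw [sup_le_iff]
    constructor <;> intro a ha <;>
      simp only [LinearMap.mem_ker, LinearMap.sub_apply, LinearMap.add_apply,
        LinearMap.id_apply] at ha <;> rw [hB]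
    · have : t a = a := by linear_combination (norm := abel) ha
      exact ⟨0, trivial, by simp [this]⟩
    · have : t a = -a := by linear_combination (norm := abel) ha
      exact ⟨-a, trivial, by simp [this, two_smul]; abel⟩
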